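/- arXiv:1507.00810 — 2 statements merged into one kernel-verified Lean document; each statement's English description precedes it below -/
import Mathlib

section
/- For all n ≥ 0 and x ∈ [5π/8, 2.68], the alternating sum H_n(x) = Σ_{k=0}^n (−1)^k cos(kx) satisfies H_n(x) ≥ 1/2 − 1/(2 cos(1.34)) > −(0.29 · 4^{11})/C(22,11). -/
open Real Finset

noncomputable def H (n : ℕ) (x : ℝ) : ℝ :=
  ∑ k ∈ Finset.range (n+1), (-1)^k * Real.cos (k * x)

lemma key (n : ℕ) (x : ℝ) :
    2 * Real.cos (x/2) * H n x = Real.cos (x/2) + (-1)^n * Real.cos (((n:ℝ) + 1/2) * x) := by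
  induction n with
  | zero =>
    push_cast
    rw [show ((0:ℝ) + 1/2) * x = x/2 by ring]
    simp [H]
    ring
  | succ n ih =>
    have hstep : H (n+1) x = H n x + (-1)^(n+1) * Real.cos (((n:ℝ)+1)*x) := by
      simp only [H, Finset.sum_range_succ]
      push_cast
      ring
    rw [hstep]
    have e2 : ((n:ℝ)+1/2)*x = (((n:ℝ)+1)*x) - x/2 := by ring
    rw [e2, Real.cos_sub] at ih
    push_cast
    rw [show ((n:ℝ)+1+1/2)*x = ((n:ℝ)+1)*x + x/2 by ring, Real.cos_add]
    linear_combination ih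

lemma cos134 : (0.22517:ℝ) ≤ Real.cos 1.34 := by
  have h0 : (0.9859308:ℝ) ≤ Real.cos 0.1675 := by
    have h := Real.cos_bound (x := 0.1675) (by rw [abs_of_pos] <;> norm_num)
    rw [abs_le, abs_of_pos (by norm_num : (0:ℝ) < 0.1675)] at h
    nlinarith [h.1]
  have e1 : Real.cos 0.335 = 2 * Real.cos 0.1675 ^ 2 - 1 := by
    rw [show (0.335:ℝ) = 2*0.1675 by norm_num, Real.cos_two_mul]
  have e2 : Real.cos 0.67 = 2 * Real.cos 0.335 ^ 2 - 1 := by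
    rw [show (0.67:ℝ) = 2*0.335 by norm_num, Real.cos_two_mul]
  have e3 : Real.cos 1.34 = 2 * Real.cos 0.67 ^ 2 - 1 := by
    rw [show (1.34:ℝ) = 2*0.67 by norm_num, Real.cos_two_mul]
  have h1 : (0.94411:ℝ) ≤ Real.cos 0.335 := by nlinarith [h0]
  have h2 : (0.78268:ℝ) ≤ Real.cos 0.67 := by nlinarith [h1]
  nlinarith [h2]

theorem stmt_13 : ∀ n : ℕ, ∀ x ∈ Set.Icc (5*Real.pi/8) 2.68,
    1/2 - 1/(2 * Real.cos 1.34) ≤ H n x ∧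
      -(0.29 * 4^11) / (Nat.choose 22 11 : ℝ) < 1/2 - 1/(2 * Real.cos 1.34) := by
  have hπ := Real.pi_gt_d6
  have hπ' := Real.pi_lt_d2
  have hc134 := cos134
  intro n x hx
  obtain ⟨hx1, hx2⟩ := hx
  have hx2' : x ≤ 2.68 := by exact_mod_cast hx2
  have hx0 : 0 ≤ x/2 := by linarith
  have hle : x/2 ≤ 1.34 := by norm_num at hx2' ⊢; linarith
  have h134pi : (1.34:ℝ) ≤ Real.pi := by linarith
  have hcx : Real.cos 1.34 ≤ Real.cos (x/2) :=
    Real.cos_le_cos_of_nonneg_of_le_pi hx0 h134pi hle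
  have hcpos : 0 < Real.cos (x/2) := by linarith
  have hkey := key n x
  have hs : (-1:ℝ) ≤ (-1)^n * Real.cos (((n:ℝ)+1/2)*x) := by
    have h1 : |(-1:ℝ)^n * Real.cos (((n:ℝ)+1/2)*x)| ≤ 1 := by
      rw [abs_mul, abs_pow, abs_neg, abs_one, one_pow, one_mul]
      exact Real.abs_cos_le_one _
    linarith [(abs_le.mp h1).1]
  have h2c : 0 < 2 * Real.cos (x/2) := by linarith
  have hH : 1/2 - 1/(2 * Real.cos (x/2)) ≤ H n x := by
    have hfield : 1/2 - 1/(2*Real.cos (x/2)) = (Real.cos (x/2) - 1)/(2*Real.cos (x/2)) := by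
      field_simp
    rw [hfield, div_le_iff₀ h2c]
    nlinarith [hkey, hs]
  constructor
  · have hmono : 1/(2*Real.cos (x/2)) ≤ 1/(2*Real.cos 1.34) :=
      one_div_le_one_div_of_le (by linarith) (by linarith)
    linarith
  · have hch : (Nat.choose 22 11 : ℝ) = 705432 := by norm_num [Nat.choose]
    rw [hch]
    have hmono : 1/(2*Real.cos 1.34) ≤ 1/(2*(0.22517:ℝ)) :=
      one_div_le_one_div_of_le (by norm_num) (by linarith)
    norm_num at hmono ⊢
    linarith
end

section
/- Let n ≥ 22 and D_n(x) = b_{22} Σ_{k=0}^{22} (−1)^k cos(kx) + Σ_{k=23}^n (−1)^k b_k cos(kx), with b_{2k} = b_{2k+1} = C(2k,k)/4^k. Then D_n(x) ≥ −0.29 for all x ∈ [5π/8, 2.68]. -/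
open Real Finset

noncomputable def b (k : ℕ) : ℝ := (Nat.choose (2*(k/2)) (k/2) : ℝ) / 4^(k/2)

noncomputable def D (n : ℕ) (x : ℝ) : ℝ :=
  b 22 * (∑ k ∈ Finset.range 23, (-1)^k * Real.cos (k * x))
    + ∑ k ∈ Finset.Icc 23 n, (-1)^k * b k * Real.cos (k * x)

lemma b_nonneg (k : ℕ) : 0 ≤ b k := by
  unfold b; positivity

lemma centralBinom_step (m : ℕ) : Nat.centralBinom (m+1) ≤ 4 * Nat.centralBinom m := by
  have h := Nat.succ_mul_centralBinom_succ m
  have h2 : (m+1) * Nat.centralBinom (m+1) ≤ (m+1) * (4 * Nat.centralBinom m) := by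
    rw [h]; ring_nf; nlinarith [Nat.centralBinom_pos m]
  exact Nat.le_of_mul_le_mul_left h2 (Nat.succ_pos m)

lemma b_step (k : ℕ) : b (k+1) ≤ b k := by
  rcases Nat.even_or_odd k with ⟨m, hm⟩ | ⟨m, hm⟩
  · subst hm
    have h1 : (m + m + 1) / 2 = m := by omega
    have h2 : (m + m) / 2 = m := by omega
    unfold b
    rw [h1, h2]
  · subst hm
    have h1 : (2*m + 1 + 1) / 2 = m + 1 := by omega
    have h2 : (2*m + 1) / 2 = m := by omega
    unfold b
    rw [h1, h2]
    rw [div_le_div_iff₀ (by positivity) (by positivity)]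
    have hcb : ((2*(m+1)).choose (m+1) : ℝ) ≤ 4 * ((2*m).choose m) := by
      have := centralBinom_step m
      rw [Nat.centralBinom_eq_two_mul_choose, Nat.centralBinom_eq_two_mul_choose] at this
      exact_mod_cast this
    have h4 : (4:ℝ)^(m+1) = 4 * 4^m := by ring
    nlinarith [pow_pos (show (0:ℝ) < 4 by norm_num) m,
      (Nat.cast_nonneg ((2*m).choose m) : (0:ℝ) ≤ ((2*m).choose m : ℝ))]

lemma b_antitone : ∀ {j k : ℕ}, j ≤ k → b k ≤ b j := by
  intro j k h
  induction k with
  | zero => simp_all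
  | succ n ih =>
    rcases Nat.lt_or_ge j (n+1) with h' | h'
    · exact le_trans (b_step n) (ih (by omega))
    · have : j = n + 1 := by omega
      subst this; rfl

/-- merged coefficient sequence -/
noncomputable def c (k : ℕ) : ℝ := if k < 23 then b 22 else b k

lemma c_nonneg (k : ℕ) : 0 ≤ c k := by
  unfold c; split <;> exact b_nonneg _

lemma c_step (k : ℕ) : c (k+1) ≤ c k := by
  unfold c
  rcases Nat.lt_or_ge (k+1) 23 with h | h
  · simp [h, show k < 23 by omega]
  · rcases Nat.lt_or_ge k 23 with h' | h'
    · have hk : k = 22 := by omega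
      subst hk
      simp only [if_neg (by omega : ¬ (23 < 23)), if_pos (by omega : (22:ℕ) < 23)]
      have : b 23 = b 22 := rfl
      rw [this]
    · simp only [if_neg (by omega : ¬ k + 1 < 23), if_neg (by omega : ¬ k < 23)]
      exact b_step k

/-- Dirichlet kernel identity -/
lemma dirichlet (θ : ℝ) (N : ℕ) :
    2 * Real.sin (θ/2) * ∑ k ∈ Finset.range N, Real.cos (k * θ)
      = Real.sin ((N - 1/2) * θ) + Real.sin (θ/2) := by
  induction N with
  | zero =>
    simp only [Finset.range_zero, Finset.sum_empty, mul_zero, Nat.cast_zero]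
    rw [show ((0:ℝ) - 1/2)*θ = -(θ/2) by ring, Real.sin_neg]; ring
  | succ n ih =>
    rw [Finset.sum_range_succ, mul_add, ih]
    have key : Real.sin (((n:ℝ) + 1 - 1/2) * θ) - Real.sin (((n:ℝ) - 1/2) * θ)
        = 2 * Real.sin (θ/2) * Real.cos (n * θ) := by
      rw [Real.sin_sub_sin]; ring_nf
    push_cast
    linarith [key]

/-- partial-sum lower bound -/
lemma partial_sum_lb (θ : ℝ) (hs : 0 < Real.sin (θ/2)) (N : ℕ) :
    (Real.sin (θ/2) - 1) / (2 * Real.sin (θ/2)) ≤ ∑ k ∈ Finset.range N, Real.cos (k * θ) := by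
  rw [div_le_iff₀ (by linarith)]
  have := dirichlet θ N
  nlinarith [Real.neg_one_le_sin (((N:ℝ) - 1/2) * θ)]

/-- Abel summation lower bound -/
lemma abel_lb (cc g : ℕ → ℝ) (L : ℝ)
    (hstep : ∀ k, cc (k+1) ≤ cc k) (hnn : ∀ k, 0 ≤ cc k)
    (hS : ∀ N, L ≤ ∑ k ∈ Finset.range N, g k) (n : ℕ) :
    cc 0 * L ≤ ∑ k ∈ Finset.range n, cc k * g k := by
  have main : ∀ m : ℕ, cc 0 * L + cc m * ((∑ k ∈ Finset.range m, g k) - L)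
      ≤ ∑ k ∈ Finset.range m, cc k * g k := by
    intro m
    induction m with
    | zero => simp
    | succ p ih =>
      rw [Finset.sum_range_succ, Finset.sum_range_succ]
      have h1 : cc (p+1) * ((∑ k ∈ Finset.range p, g k) + g p - L)
          ≤ cc p * ((∑ k ∈ Finset.range p, g k) + g p - L) := by
        apply mul_le_mul_of_nonneg_right (hstep p)
        have := hS (p+1)
        rw [Finset.sum_range_succ] at this
        linarith
      nlinarith [ih]
  have := main n
  nlinarith [mul_nonneg (hnn n) (sub_nonneg.mpr (hS n))]

lemma cos_shift (k : ℕ) (x : ℝ) :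
    Real.cos ((k:ℝ) * (x + Real.pi)) = (-1)^k * Real.cos (k * x) := by
  have : (k:ℝ) * (x + Real.pi) = (k:ℝ) * Real.pi - (-(k * x)) := by ring
  rw [this, Real.cos_nat_mul_pi_sub, Real.cos_neg]

lemma D_eq (n : ℕ) (hn : 22 ≤ n) (x : ℝ) :
    D n x = ∑ k ∈ Finset.range (n+1), c k * Real.cos ((k:ℝ) * (x + Real.pi)) := by
  have hsplit : ∑ k ∈ Finset.range (n+1), c k * Real.cos ((k:ℝ) * (x + Real.pi))
      = (∑ k ∈ Finset.range 23, c k * Real.cos ((k:ℝ) * (x + Real.pi)))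
        + ∑ k ∈ Finset.Ico 23 (n+1), c k * Real.cos ((k:ℝ) * (x + Real.pi)) := by
    rw [Finset.range_eq_Ico, ← Finset.sum_Ico_consecutive _ (by omega : 0 ≤ 23) (by omega : 23 ≤ n+1),
      ← Finset.range_eq_Ico]
  rw [hsplit]
  unfold D
  congr 1
  · rw [Finset.mul_sum]
    apply Finset.sum_congr rfl
    intro k hk
    simp only [Finset.mem_range] at hk
    rw [cos_shift, c, if_pos hk]
  · rw [show Finset.Icc 23 n = Finset.Ico 23 (n+1) from (Finset.Ico_add_one_right_eq_Icc 23 n).symm]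
    apply Finset.sum_congr rfl
    intro k hk
    simp only [Finset.mem_Ico] at hk
    rw [cos_shift, c, if_neg (by omega)]
    ring

lemma cos_134_lb : (0.226 : ℝ) ≤ Real.cos 1.34 := by
  have h134 : (1.34 : ℝ) = 2 * (2 * 0.335) := by norm_num
  set s := Real.sin 0.335 with hs
  have hpi : (3.14 : ℝ) < Real.pi := by
    have := Real.pi_gt_d6; linarith
  have hs0 : 0 ≤ s := Real.sin_nonneg_of_nonneg_of_le_pi (by norm_num) (by linarith)
  have hub : s ≤ 0.32939007 := by
    have hb := Real.sin_bound (x := 0.335) (by rw [abs_of_nonneg] <;> norm_num)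
    rw [abs_of_nonneg (by norm_num : (0:ℝ) ≤ 0.335), abs_le] at hb
    have h2 := hb.2
    rw [← hs] at h2
    nlinarith [h2]
  have hcos2 : Real.cos (2 * 0.335) = 1 - 2 * s^2 := by
    rw [Real.cos_two_mul]
    have := Real.sin_sq_add_cos_sq (0.335 : ℝ)
    nlinarith
  have hcos4 : Real.cos 1.34 = 1 - 8*s^2 + 8*s^4 := by
    rw [h134, Real.cos_two_mul, hcos2]; ring
  rw [hcos4]
  nlinarith [sq_nonneg s, sq_nonneg (s^2 - 0.32939007^2), mul_self_nonneg s]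

theorem stmt_14 (n : ℕ) (hn : 22 ≤ n) :
    ∀ x ∈ Set.Icc (5*Real.pi/8) 2.68, D n x ≥ -0.29 := by
  intro x hx
  obtain ⟨hx1, hx2⟩ := hx
  have hpi : (3.14 : ℝ) < Real.pi := by
    have := Real.pi_gt_d6; linarith
  have hpi2 : Real.pi < 3.15 := by
    have := Real.pi_lt_d2; linarith
  set θ := x + Real.pi with hθ
  have hhalf : θ / 2 = x/2 + Real.pi/2 := by rw [hθ]; ring
  have hsin : Real.sin (θ/2) = Real.cos (x/2) := by
    rw [hhalf, Real.sin_add_pi_div_two]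
  have hxlb : 0 < x := by nlinarith
  have hcb : Real.cos 1.34 ≤ Real.cos (x/2) := by
    apply Real.cos_le_cos_of_nonneg_of_le_pi (by linarith) (by linarith) (by linarith)
  have hslb : (0.226:ℝ) ≤ Real.sin (θ/2) := by
    rw [hsin]; linarith [cos_134_lb]
  have hspos : 0 < Real.sin (θ/2) := by linarith
  set s := Real.sin (θ/2) with hsdef
  set L := (s - 1) / (2 * s) with hL
  have hDk : ∀ N, L ≤ ∑ k ∈ Finset.range N, Real.cos ((k:ℝ) * θ) :=
    partial_sum_lb θ hspos
  have habel := abel_lb c (fun k => Real.cos ((k:ℝ) * θ)) L c_step c_nonneg hDk (n+1)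
  rw [← D_eq n hn x] at habel
  have hc0 : c 0 = b 22 := rfl
  rw [hc0] at habel
  have hb22 : b 22 = 705432 / 4194304 := by
    have hch : Nat.choose 22 11 = 705432 := by decide
    unfold b
    norm_num [hch]
  have hs1 : s ≤ 1 := Real.sin_le_one _
  have hfinal : (-0.29 : ℝ) ≤ b 22 * L := by
    rw [hb22, hL]
    rw [show (705432/4194304 : ℝ) * ((s - 1)/(2*s)) = (705432/4194304*(s-1))/(2*s) by ring]
    rw [le_div_iff₀ (by linarith : (0:ℝ) < 2*s)]
    linarith
  linarith [habel, hfinal]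
end
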